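/- Let G=(V,E) be a finite simple connected graph with maximum degree Δ, and let V = A ∪ B ∪ C be a decomposition satisfying properties (1)–(4). Then #E(A∪C, B) ≥ (1/2 + 1/(3Δ))·MaxCut(G), where MaxCut(G) is the maximum over all partitions V = S ∪ (V∖S) of the number of crossing edges. -/

import Mathlib

open Finset
set_option linter.unusedSectionVars false
set_option linter.deprecated false
set_option maxHeartbeats 800000

variable {V : Type*} [Fintype V] [DecidableEq V]

/-- Number of neighbors of `v` lying in `S`. -/
def degIn (G : SimpleGraph V) [DecidableRel G.Adj] (v : V) (S : Finset V) : ℕ :=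
  (S.filter (G.Adj v)).card

/-- Number of edges with one endpoint in `X` and the other in `Y`
(each edge counted once; for `X = Y` this is the number of edges inside `X`). -/
def eBtw (G : SimpleGraph V) [DecidableRel G.Adj] (X Y : Finset V) : ℕ :=
  (G.edgeFinset.filter (fun e => ∃ x ∈ X, ∃ y ∈ Y, e = s(x, y))).card

/-- The maximum cut of `G`: the maximum over `S ⊆ V` of the number of edges between
`S` and its complement. -/
def maxCut (G : SimpleGraph V) [DecidableRel G.Adj] : ℕ :=
  (Finset.univ : Finset (Finset V)).sup (fun S => eBtw G S (Finset.univ \ S))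

lemma degIn_eq_sum (G : SimpleGraph V) [DecidableRel G.Adj] (v : V) (S : Finset V) :
    degIn G v S = ∑ y ∈ S, if G.Adj v y then 1 else 0 := by
  unfold degIn; rw [Finset.card_filter]

lemma sum_degIn_comm (G : SimpleGraph V) [DecidableRel G.Adj] (X Y : Finset V) :
    ∑ x ∈ X, degIn G x Y = ∑ y ∈ Y, degIn G y X := by
  simp_rw [degIn_eq_sum]
  rw [Finset.sum_comm]
  congr 1; ext y; congr 1; ext x; simp [G.adj_comm]

lemma degIn_union (G : SimpleGraph V) [DecidableRel G.Adj] (v : V) {S T : Finset V}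
    (h : Disjoint S T) : degIn G v (S ∪ T) = degIn G v S + degIn G v T := by
  unfold degIn
  rw [Finset.filter_union, Finset.card_union_of_disjoint]
  exact h.mono (Finset.filter_subset _ _) (Finset.filter_subset _ _)

lemma degIn_univ (G : SimpleGraph V) [DecidableRel G.Adj] (v : V) :
    degIn G v Finset.univ = G.degree v := by
  unfold degIn
  rw [SimpleGraph.degree]
  congr 1
  ext w
  simp [SimpleGraph.mem_neighborFinset]

lemma maxCut_le_card (G : SimpleGraph V) [DecidableRel G.Adj] :
    maxCut G ≤ G.edgeFinset.card := by
  apply Finset.sup_le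
  intro S _
  exact Finset.card_filter_le _ _

lemma eBtw_eq_sum (G : SimpleGraph V) [DecidableRel G.Adj] {X Y : Finset V}
    (hXY : Disjoint X Y) : eBtw G X Y = ∑ x ∈ X, degIn G x Y := by
  classical
  have hP : ∑ x ∈ X, degIn G x Y = ((X ×ˢ Y).filter fun p => G.Adj p.1 p.2).card := by
    rw [Finset.card_filter, Finset.sum_product]
    simp_rw [degIn_eq_sum]
  rw [hP, eBtw]
  symm
  apply Finset.card_bij (fun (p : V × V) _ => s(p.1, p.2))
  · rintro ⟨x, y⟩ hp
    simp only [Finset.mem_filter, Finset.mem_product] at hp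
    obtain ⟨⟨hx, hy⟩, hadj⟩ := hp
    simp only [Finset.mem_filter, SimpleGraph.mem_edgeFinset]
    exact ⟨hadj, x, hx, y, hy, rfl⟩
  · rintro ⟨x1, y1⟩ hp1 ⟨x2, y2⟩ hp2 heq
    simp only [Finset.mem_filter, Finset.mem_product] at hp1 hp2
    simp only [Sym2.mk, Sym2.eq_iff] at heq
    rcases heq with ⟨rfl, rfl⟩ | ⟨rfl, rfl⟩
    · rfl
    · exact absurd hp1.1.1 (Finset.disjoint_left.mp hXY.symm hp2.1.2)
  · intro e he
    simp only [Finset.mem_filter, SimpleGraph.mem_edgeFinset] at he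
    obtain ⟨he', x, hx, y, hy, rfl⟩ := he
    refine ⟨(x, y), ?_, rfl⟩
    simp only [Finset.mem_filter, Finset.mem_product]
    exact ⟨⟨hx, hy⟩, (SimpleGraph.mem_edgeSet G).mp he'⟩

lemma walk_exists_adj {G : SimpleGraph V} {u v : V} (p : G.Walk u v) (h : u ≠ v) :
    ∃ w, G.Adj u w := by
  induction p with
  | nil => exact absurd rfl h
  | cons ha q ih => exact ⟨_, ha⟩

lemma exists_adj (G : SimpleGraph V) [DecidableRel G.Adj] (hconn : G.Connected)
    (hΔ : 1 ≤ G.maxDegree) (c : V) : ∃ w, G.Adj c w := by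
  have : Nonempty V := hconn.nonempty
  obtain ⟨v, hv⟩ := G.exists_maximal_degree_vertex
  have hvdeg : 0 < G.degree v := by omega
  rw [← SimpleGraph.card_neighborFinset_eq_degree] at hvdeg
  obtain ⟨w, hw⟩ := Finset.card_pos.mp hvdeg
  rw [SimpleGraph.mem_neighborFinset] at hw
  by_cases hcv : c = v
  · exact ⟨w, hcv ▸ hw⟩
  · obtain ⟨p⟩ := hconn.preconnected c v
    exact walk_exists_adj p hcv

theorem cut_vs_maxcut (G : SimpleGraph V) [DecidableRel G.Adj]
    (hconn : G.Connected) (hΔ : 1 ≤ G.maxDegree)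
    (A B C : Finset V)
    (hU : A ∪ B ∪ C = Finset.univ)
    (hAB : Disjoint A B) (hAC : Disjoint A C) (hBC : Disjoint B C)
    (h1 : ∀ a ∈ A, degIn G a A + max 1 (degIn G a C) ≤ degIn G a B)
    (h2 : ∀ b ∈ B, degIn G b B + max 1 (degIn G b C) ≤ degIn G b A)
    (h3 : ∀ c ∈ C, ∀ c' ∈ C, ¬ G.Adj c c')
    (h4 : ∀ c ∈ C, degIn G c A = degIn G c B) :
    ((1 : ℚ) / 2 + 1 / (3 * G.maxDegree)) * maxCut G ≤ eBtw G (A ∪ C) B := by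
  classical
  set Δ := G.maxDegree with hΔdef
  set m := G.edgeFinset.card with hmdef
  set sAA := ∑ a ∈ A, degIn G a A with hsAA
  set sAB := ∑ a ∈ A, degIn G a B with hsAB
  set sAC := ∑ a ∈ A, degIn G a C with hsAC
  set sBB := ∑ b ∈ B, degIn G b B with hsBB
  set sBC := ∑ b ∈ B, degIn G b C with hsBC
  have hdisjABC : Disjoint (A ∪ B) C := Finset.disjoint_union_left.mpr ⟨hAC, hBC⟩
  have hdisjACB : Disjoint (A ∪ C) B := Finset.disjoint_union_left.mpr ⟨hAB, hBC.symm⟩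
  -- every vertex of C has a neighbor in A
  have hCA : ∀ c ∈ C, 1 ≤ degIn G c A := by
    intro c hc
    obtain ⟨w, hw⟩ := exists_adj G hconn hΔ c
    have hwU : w ∈ A ∪ B ∪ C := by rw [hU]; exact Finset.mem_univ w
    rcases Finset.mem_union.mp hwU with hwAB | hwC
    · rcases Finset.mem_union.mp hwAB with hwA | hwB
      · exact Finset.card_pos.mpr ⟨w, Finset.mem_filter.mpr ⟨hwA, hw⟩⟩
      · rw [show degIn G c A = degIn G c B from h4 c hc]
        exact Finset.card_pos.mpr ⟨w, Finset.mem_filter.mpr ⟨hwB, hw⟩⟩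
    · exact absurd hw (h3 c hc w hwC)
  -- summed inequalities from (1)
  have hsum1 := Finset.sum_le_sum h1
  rw [Finset.sum_add_distrib] at hsum1
  have f1 : sAA + A.card ≤ sAB := by
    have h := Finset.sum_le_sum (fun a (_ : a ∈ A) => le_max_left 1 (degIn G a C))
    simp only [Finset.sum_const, smul_eq_mul, mul_one] at h
    omega
  have f2 : sAA + sAC ≤ sAB := by
    have h := Finset.sum_le_sum (fun a (_ : a ∈ A) => le_max_right 1 (degIn G a C))
    omega
  -- summed inequalities from (2)
  have hsum2 := Finset.sum_le_sum h2
  rw [Finset.sum_add_distrib] at hsum2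
  have hBAeq : ∑ b ∈ B, degIn G b A = sAB := (sum_degIn_comm G B A).trans rfl
  rw [hBAeq] at hsum2
  have f3 : sBB + B.card ≤ sAB := by
    have h := Finset.sum_le_sum (fun b (_ : b ∈ B) => le_max_left 1 (degIn G b C))
    simp only [Finset.sum_const, smul_eq_mul, mul_one] at h
    omega
  have f4 : sBB + sBC ≤ sAB := by
    have h := Finset.sum_le_sum (fun b (_ : b ∈ B) => le_max_right 1 (degIn G b C))
    omega
  -- from (4) and connectivity
  have hCAsum : ∑ c ∈ C, degIn G c A = sAC := (sum_degIn_comm G C A).symm ▸ rfl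
  have hCBsum : ∑ c ∈ C, degIn G c B = sBC := (sum_degIn_comm G C B).symm ▸ rfl
  have f5 : sAC = sBC := by
    rw [← hCAsum, ← hCBsum]
    exact Finset.sum_congr rfl h4
  have f6 : C.card ≤ sAC := by
    rw [← hCAsum]
    calc C.card = ∑ _c ∈ C, 1 := by rw [Finset.sum_const, smul_eq_mul, mul_one]
    _ ≤ ∑ c ∈ C, degIn G c A := Finset.sum_le_sum hCA
  -- C is independent
  have hCC0 : ∑ c ∈ C, degIn G c C = 0 := by
    apply Finset.sum_eq_zero
    intro c hc
    unfold degIn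
    rw [Finset.card_eq_zero, Finset.filter_eq_empty_iff]
    exact fun {c'} hc' => h3 c hc c' hc'
  -- handshake decomposition
  have hdeg : ∀ v, G.degree v = degIn G v A + degIn G v B + degIn G v C := by
    intro v
    rw [← degIn_univ, ← hU, degIn_union G v hdisjABC, degIn_union G v hAB]
  have h2m : 2 * m = sAA + sBB + 2 * sAB + 4 * sBC := by
    rw [hmdef, ← SimpleGraph.sum_degrees_eq_twice_card_edges,
      show (Finset.univ : Finset V) = A ∪ B ∪ C from hU.symm,
      Finset.sum_union hdisjABC, Finset.sum_union hAB]
    simp only [hdeg, Finset.sum_add_distrib]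
    rw [hBAeq, hCAsum, hCBsum, hCC0, sum_degIn_comm G B C, hCBsum]
    omega
  -- degree bound
  have hdegbound : 2 * m ≤ (A.card + B.card + C.card) * Δ := by
    rw [hmdef, ← SimpleGraph.sum_degrees_eq_twice_card_edges]
    calc ∑ v, G.degree v ≤ ∑ _v : V, Δ :=
          Finset.sum_le_sum fun v _ => G.degree_le_maxDegree v
      _ = Fintype.card V * Δ := by rw [Finset.sum_const, smul_eq_mul, Finset.card_univ]
      _ = (A.card + B.card + C.card) * Δ := by
          congr 1
          rw [← Finset.card_univ, show (Finset.univ : Finset V) = A ∪ B ∪ C from hU.symm,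
            Finset.card_union_of_disjoint hdisjABC, Finset.card_union_of_disjoint hAB]
  -- the cut value
  have hcut : eBtw G (A ∪ C) B = sAB + sBC := by
    rw [eBtw_eq_sum G hdisjACB, Finset.sum_union hAC, hCBsum]
  have hmc : maxCut G ≤ m := maxCut_le_card G
  -- the key natural-number inequality
  have hkey : 3 * sAA + 3 * sBB + 2 * (A.card + B.card + C.card) ≤ 6 * sAB := by omega
  have hkeyΔ := Nat.mul_le_mul_right Δ hkey
  have hE : 3 * sAA * Δ + 3 * sBB * Δ + 2 * (2 * m) ≤ 6 * sAB * Δ := by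
    have h2 := Nat.mul_le_mul_left 2 hdegbound
    nlinarith [hkeyΔ]
  have hmΔ : 2 * m * Δ = (sAA + sBB + 2 * sAB + 4 * sBC) * Δ := by rw [h2m]
  have hnat : (3 * Δ + 2) * maxCut G ≤ 6 * Δ * eBtw G (A ∪ C) B := by
    rw [hcut]
    have hmc' : (3 * Δ + 2) * maxCut G ≤ (3 * Δ + 2) * m := Nat.mul_le_mul_left _ hmc
    nlinarith [hE, hmΔ, h2m]
  -- pass to ℚ
  have hΔ1 : (1 : ℚ) ≤ (Δ : ℚ) := by exact_mod_cast hΔ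
  have h6Δ : (0 : ℚ) < 6 * (Δ : ℚ) := by linarith
  have heq : (1 : ℚ) / 2 + 1 / (3 * (Δ : ℚ)) = (3 * Δ + 2) / (6 * Δ) := by
    field_simp
    ring
  rw [heq, div_mul_eq_mul_div, div_le_iff₀ h6Δ]
  calc ((3 * (Δ : ℚ) + 2) * (maxCut G : ℚ)) ≤ (6 * Δ * eBtw G (A ∪ C) B : ℚ) := by
        exact_mod_cast hnat
    _ = (eBtw G (A ∪ C) B : ℚ) * (6 * Δ) := by ring
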